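/- Let G = (V, E_1, …, E_k) be a multilayer graph with aggregated edge set E and for e ∈ E let m(e) = |{ ℓ ∈ [k] : e ∈ E_ℓ }|. Then the optimum of MinMultiLayerSTC on G, i.e., the minimum of Σ_{i∈[k]} |E_i∖S_i| + d_k(S_1,…,S_k) over all families of labelings S_i ⊆ E_i each fulfilling the STC for E_i, equals the minimum of Σ_{e∈E} y(e)·m(e) over all functions y : E → {0,1} satisfying y({i,j}) + y({i,h}) ≥ 1 for every wedge (i,{j,h}) ∈ 𝒲(E_ℓ) and every ℓ ∈ [k]. -/

import Mathlib

open Finset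

/-- A wedge `(v, {u, w})` of an edge set `E`. -/
def IsWedge {V : Type*} (E : Finset (Sym2 V)) (v u w : V) : Prop :=
  u ≠ v ∧ v ≠ w ∧ u ≠ w ∧ s(u, v) ∈ E ∧ s(v, w) ∈ E ∧ s(u, w) ∉ E

/-- A labeling `S ⊆ E` fulfills the strong triadic closure for `E`. -/
def FulfillsSTC {V : Type*} (E S : Finset (Sym2 V)) : Prop :=
  ∀ u v w : V, u ≠ v → v ≠ w → u ≠ w → s(u, v) ∈ S → s(v, w) ∈ S → s(u, w) ∈ E

/-- `s(e)`: the number of layers in which `e` is labeled strong. -/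
def sCount {V : Type*} [DecidableEq V] {k : ℕ} (Ss : Fin k → Finset (Sym2 V))
    (e : Sym2 V) : ℕ :=
  (Finset.univ.filter fun i => e ∈ Ss i).card

/-- `w(e)`: the number of layers in which `e` is labeled weak. -/
def wCount {V : Type*} [DecidableEq V] {k : ℕ} (Es Ss : Fin k → Finset (Sym2 V))
    (e : Sym2 V) : ℕ :=
  (Finset.univ.filter fun i => e ∈ Es i ∧ e ∉ Ss i).card

/-- `d_k(S_1, …, S_k) = ∑_{e ∈ E, w(e) > 0} s(e)`: the number of disagreements. -/
def disagree {V : Type*} [DecidableEq V] {k : ℕ} (Es Ss : Fin k → Finset (Sym2 V)) : ℕ :=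
  ∑ e ∈ (Finset.univ.biUnion Es).filter (fun e => 0 < wCount Es Ss e), sCount Ss e

/-- `m(e) = |{ℓ ∈ [k] : e ∈ E_ℓ}|`: the number of layers containing `e`. -/
def mlayers {V : Type*} [DecidableEq V] {k : ℕ} (Es : Fin k → Finset (Sym2 V))
    (e : Sym2 V) : ℕ :=
  (Finset.univ.filter fun i => e ∈ Es i).card

-- double counting
lemma sum_sdiff_eq_sum_wCount {V : Type*} [DecidableEq V] {k : ℕ}
    (Es Ss : Fin k → Finset (Sym2 V)) (hsub : ∀ i, Ss i ⊆ Es i) :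
    ∑ i : Fin k, (Es i \ Ss i).card
      = ∑ e ∈ Finset.univ.biUnion Es, wCount Es Ss e := by
  have h1 : ∀ i : Fin k, (Es i \ Ss i).card
      = ((Finset.univ.biUnion Es).filter (fun e => e ∈ Es i ∧ e ∉ Ss i)).card := by
    intro i
    congr 1
    ext e
    simp only [mem_sdiff, mem_filter, mem_biUnion, mem_univ, true_and]
    constructor
    · rintro ⟨he, hs⟩; exact ⟨⟨i, he⟩, he, hs⟩
    · rintro ⟨_, he, hs⟩; exact ⟨he, hs⟩
  simp only [h1, card_filter]
  rw [Finset.sum_comm]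
  refine Finset.sum_congr rfl fun e _ => ?_
  rw [wCount, card_filter]

lemma mlayers_eq {V : Type*} [DecidableEq V] {k : ℕ}
    (Es Ss : Fin k → Finset (Sym2 V)) (hsub : ∀ i, Ss i ⊆ Es i) (e : Sym2 V) :
    mlayers Es e = sCount Ss e + wCount Es Ss e := by
  classical
  rw [mlayers, sCount, wCount, ← card_union_of_disjoint]
  · congr 1
    ext i
    simp only [mem_union, mem_filter, mem_univ, true_and]
    constructor
    · intro he
      by_cases hs : e ∈ Ss i
      · exact Or.inl hs
      · exact Or.inr ⟨he, hs⟩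
    · rintro (hs | ⟨he, _⟩)
      · exact hsub i hs
      · exact he
  · rw [Finset.disjoint_filter]
    rintro i _ hs ⟨_, hns⟩
    exact hns hs

/-- The optimum of MinMultiLayerSTC equals the optimum of its ILP formulation with
binary variables `y(e)` and constraints `y({u,v}) + y({v,w}) ≥ 1` for every wedge
`(v, {u, w})` of every layer. -/
theorem min_multilayer_stc_eq_ilp {V : Type*} [DecidableEq V] {k : ℕ}
    (Es : Fin k → Finset (Sym2 V)) :
    sInf {n : ℕ | ∃ Ss : Fin k → Finset (Sym2 V),
        (∀ i, Ss i ⊆ Es i) ∧ (∀ i, FulfillsSTC (Es i) (Ss i)) ∧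
        n = (∑ i : Fin k, (Es i \ Ss i).card) + disagree Es Ss}
      = sInf {n : ℕ | ∃ y : Sym2 V → ℕ, (∀ e, y e ≤ 1) ∧
        (∀ ℓ : Fin k, ∀ v u w : V, IsWedge (Es ℓ) v u w →
          1 ≤ y s(u, v) + y s(v, w)) ∧
        n = ∑ e ∈ Finset.univ.biUnion Es, y e * mlayers Es e} := by
  congr 1
  ext n
  simp only [Set.mem_setOf_eq]
  constructor
  · rintro ⟨Ss, hsub, hstc, rfl⟩
    refine ⟨fun e => if 0 < wCount Es Ss e then 1 else 0, ?_, ?_, ?_⟩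
    · intro e; dsimp only; split <;> simp
    · rintro ℓ v u w ⟨huv, hvw, huw, h1, h2, h3⟩
      have key : s(u, v) ∉ Ss ℓ ∨ s(v, w) ∉ Ss ℓ := by
        by_contra hc
        push_neg at hc
        exact h3 (hstc ℓ u v w huv hvw huw hc.1 hc.2)
      have hpos : ∀ e, e ∈ Es ℓ → e ∉ Ss ℓ → 0 < wCount Es Ss e := by
        intro e he hs
        rw [wCount, card_pos]
        exact ⟨ℓ, by simp [he, hs]⟩
      rcases key with h | h
      · have := hpos _ h1 h
        simp [this]
      · have := hpos _ h2 h
        simp [this]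
    · rw [sum_sdiff_eq_sum_wCount Es Ss hsub]
      have : ∀ e ∈ Finset.univ.biUnion Es,
          (if 0 < wCount Es Ss e then 1 else 0) * mlayers Es e
            = (if 0 < wCount Es Ss e then sCount Ss e else 0) + wCount Es Ss e := by
        intro e _
        by_cases h : 0 < wCount Es Ss e
        · simp [h, mlayers_eq Es Ss hsub e]
        · simp [h, Nat.eq_zero_of_not_pos h]
      rw [Finset.sum_congr rfl this, Finset.sum_add_distrib, ← Finset.sum_filter]
      rw [Nat.add_comm]
      rfl
  · rintro ⟨y, hy1, hwedge, rfl⟩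
    refine ⟨fun i => (Es i).filter (fun e => y e = 0), fun i => filter_subset _ _, ?_, ?_⟩
    · intro i u v w huv hvw huw h1 h2
      simp only [mem_filter] at h1 h2
      by_contra h3
      have := hwedge i v u w ⟨huv, hvw, huw, h1.1, h2.1, h3⟩
      omega
    · set Ss : Fin k → Finset (Sym2 V) := fun i => (Es i).filter (fun e => y e = 0) with hSs
      have hsub : ∀ i, Ss i ⊆ Es i := fun i => filter_subset _ _
      have hw : ∀ e, wCount Es Ss e = if y e = 0 then 0 else mlayers Es e := by
        intro e
        by_cases h : y e = 0
        · simp only [h, if_pos]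
          rw [wCount, card_eq_zero, filter_eq_empty_iff]
          intro i _
          simp only [hSs, Finset.mem_filter, not_and, not_not]
          tauto
        · rw [if_neg h, wCount, mlayers]
          congr 1
          ext i
          simp only [mem_filter, mem_univ, true_and, hSs, Finset.mem_filter]
          tauto
      have hdis : disagree Es Ss = 0 := by
        rw [disagree]
        apply Finset.sum_eq_zero
        intro e he
        simp only [mem_filter] at he
        have hy : ¬ (y e = 0) := by
          intro h0
          rw [hw e, if_pos h0] at he
          exact absurd he.2 (lt_irrefl 0)
        rw [sCount, card_eq_zero, filter_eq_empty_iff]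
        intro i _
        simp [hSs]
        tauto
      rw [hdis, Nat.add_zero, sum_sdiff_eq_sum_wCount Es Ss hsub]
      apply Finset.sum_congr rfl
      intro e _
      rw [hw e]
      by_cases h : y e = 0
      · simp [h]
      · have : y e = 1 := by have := hy1 e; omega
        simp [h, this]
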